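/- With F as defined from the sequence ⟨σ_i⟩ (F(x) = {f_i(x) : i ∈ ω} where f_i(x)(k) = x(k) for k < i and σ_i(x(k)) otherwise): if {W_α : α < ω₁} is a family of pairwise disjoint finite subsets of ω^ω, then there exist β < ω₁ and an infinite set A ⊆ β such that for all α ∈ A, all x ∈ W_α, and all y ∈ W_β, x ∉ F(y). -/

import Mathlib

noncomputable def omega1 : Ordinal := (Cardinal.aleph 1).ord

def fseq (σ : ℕ → ℕ → ℕ) (i : ℕ) (x : ℕ → ℕ) : ℕ → ℕ :=
  fun k => if k < i then x k else σ i (x k)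

def Fset (σ : ℕ → ℕ → ℕ) (x : ℕ → ℕ) : Set (ℕ → ℕ) :=
  {z | ∃ i : ℕ, z = fseq σ i x}

private lemma infinite_fiber {γ : Type*} {s : Set ℕ} (hs : s.Infinite) (f : ℕ → γ)
    {t : Set γ} (ht : t.Finite) (hmap : ∀ n ∈ s, f n ∈ t) :
    ∃ c, {n | n ∈ s ∧ f n = c}.Infinite := by
  by_contra h
  push_neg at h
  exact hs ((ht.biUnion fun c _ => h c).subset fun n hn =>
    Set.mem_biUnion (hmap n hn) ⟨hn, rfl⟩)

/-- If {W_α : α < ω₁} is a family of pairwise disjoint finite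
subsets of ω^ω, then there are β < ω₁ and an infinite A ⊆ β such that for all
α ∈ A, x ∈ W_α and y ∈ W_β, x ∉ F(y). -/
theorem stmt2 (σ : ℕ → ℕ → ℕ) (W : Ordinal → Set (ℕ → ℕ))
    (hfin : ∀ α ∈ Set.Iio omega1, (W α).Finite)
    (hdisj : ∀ α ∈ Set.Iio omega1, ∀ β ∈ Set.Iio omega1, α ≠ β →
      Disjoint (W α) (W β)) :
    ∃ β ∈ Set.Iio omega1, ∃ A : Set Ordinal, A ⊆ Set.Iio β ∧ A.Infinite ∧
      ∀ α ∈ A, ∀ x ∈ W α, ∀ y ∈ W β, x ∉ Fset σ y := by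
  by_contra hcon
  push_neg at hcon
  -- Step 1: every good-set is finite
  have hGd : ∀ β, β < omega1 →
      {α : Ordinal | α < β ∧ ∀ x ∈ W α, ∀ y ∈ W β, x ∉ Fset σ y}.Finite := by
    intro β hβ
    rw [← Set.not_infinite]
    intro hinf
    obtain ⟨α, hα, x, hx, y, hy, hxy⟩ := hcon β hβ _ (fun a ha => ha.1) hinf
    exact hα.2 x hx y hy hxy
  -- Step 2: Iio omega1 is uncountable
  have hunc : ¬ (Set.Iio omega1).Countable := by
    intro hc
    have h1 := hc.le_aleph0
    rw [Ordinal.mk_Iio_ordinal, show omega1.card = Cardinal.aleph 1 from Cardinal.card_ord _,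
      Cardinal.lift_le_aleph0] at h1
    exact absurd h1 (not_le.mpr Cardinal.aleph0_lt_aleph_one)
  -- Step 3: some size class is infinite
  obtain ⟨m, hm⟩ : ∃ m : ℕ, ¬ {α | α < omega1 ∧ (W α).ncard = m}.Countable := by
    by_contra h
    push_neg at h
    refine hunc (Set.Countable.mono ?_ (Set.countable_iUnion h))
    intro α hα
    exact Set.mem_iUnion.mpr ⟨(W α).ncard, hα, rfl⟩
  have hSm : {α | α < omega1 ∧ (W α).ncard = m}.Infinite := by
    by_contra h
    rw [Set.not_infinite] at h
    exact hm h.countable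
  let g : ℕ ↪ _ := hSm.natEmbedding
  let o : ℕ → Ordinal := fun n => (g n : Ordinal)
  have ho_lt : ∀ n, o n < omega1 := fun n => (g n).2.1
  have ho_card : ∀ n, (W (o n)).ncard = m := fun n => (g n).2.2
  have ho_inj : Function.Injective o := fun a b h =>
    g.injective (Subtype.coe_injective h)
  -- Step 4: δ above all the o n
  let δ : Ordinal := ⨆ n, o n + 1
  have hlim : Order.IsSuccLimit omega1 := Cardinal.isSuccLimit_ord (Cardinal.aleph0_le_aleph 1)
  have hδlt : δ < omega1 := by
    show (⨆ n, o n + 1) < omega1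
    apply Ordinal.iSup_lt_ord_lift
    · rw [show omega1.cof = Cardinal.aleph 1 from Cardinal.isRegular_aleph_one.cof_eq,
        Cardinal.mk_nat, Cardinal.lift_aleph0]
      exact Cardinal.aleph0_lt_aleph_one
    · intro n
      rw [Ordinal.add_one_eq_succ]
      exact hlim.succ_lt (ho_lt n)
  have hδcard : δ.card < Cardinal.aleph 1 := Cardinal.lt_ord.mp hδlt
  -- the m+1 ordinals above δ
  let B : ℕ → Ordinal := fun j => δ + ((j + 1 : ℕ) : Ordinal)
  have hBlt : ∀ j, B j < omega1 := by
    intro j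
    have : (B j).card = δ.card + ((j + 1 : ℕ) : Cardinal) := by
      simp only [B, Ordinal.card_add, Ordinal.card_nat]
    rw [show omega1 = (Cardinal.aleph 1).ord from rfl, Cardinal.lt_ord, this]
    exact Cardinal.add_lt_of_lt (Cardinal.aleph0_le_aleph 1) hδcard
      ((Cardinal.nat_lt_aleph0 _).trans Cardinal.aleph0_lt_aleph_one)
  have hBgt : ∀ j n, o n < B j := by
    intro j n
    have h1 : o n < o n + 1 := by
      rw [Ordinal.add_one_eq_succ]; exact Order.lt_succ _
    have h2 : o n + 1 ≤ δ := Ordinal.le_iSup (fun n => o n + 1) n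
    exact (h1.trans_le h2).trans_le (le_add_of_nonneg_right (by simp))
  have hBne : ∀ {j l : ℕ}, j ≠ l → B j ≠ B l := by
    intro j l hjl hB
    rw [add_left_cancel_iff] at hB
    exact hjl (by exact_mod_cast Nat.succ_injective (by exact_mod_cast hB))
  -- Step 5: the infinite set of indices that are bad for all B j, j ≤ m
  let Mset : Set ℕ := {n | ∀ j ≤ m, o n ∉ {α : Ordinal | α < B j ∧
      ∀ x ∈ W α, ∀ y ∈ W (B j), x ∉ Fset σ y}}
  have hMinf : Mset.Infinite := by
    have hfin2 : (⋃ j ∈ Set.Iic m, (o ⁻¹' {α : Ordinal | α < B j ∧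
        ∀ x ∈ W α, ∀ y ∈ W (B j), x ∉ Fset σ y})).Finite :=
      (Set.finite_Iic m).biUnion fun j _ =>
        Set.Finite.preimage ho_inj.injOn (hGd (B j) (hBlt j))
    refine Set.Infinite.mono ?_ hfin2.infinite_compl
    intro n hn j hj hmem
    exact hn (Set.mem_biUnion hj hmem)
  have hbad : ∀ n ∈ Mset, ∀ j, j ≤ m →
      ∃ x ∈ W (o n), ∃ y ∈ W (B j), ∃ i, x = fseq σ i y := by
    intro n hn j hj
    by_contra hno
    push_neg at hno
    exact hn j hj ⟨hBgt j n, fun x hx y hy hxy => by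
      obtain ⟨i, hi⟩ := hxy
      exact hno x hx y hy i hi⟩
  -- Step 6: per n, pigeonhole inside W (o n)
  have key : ∀ n : ℕ, ∃ jj ll : ℕ, ∃ yy yy' : ℕ → ℕ, n ∈ Mset →
      jj ≤ m ∧ ll ≤ m ∧ jj ≠ ll ∧ yy ∈ W (B jj) ∧ yy' ∈ W (B ll) ∧
      ∃ i i', fseq σ i yy = fseq σ i' yy' ∧ fseq σ i yy ∈ W (o n) := by
    intro n
    by_cases hn : n ∈ Mset
    · choose x hx y hy i hi using
        fun j : Fin (m + 1) => hbad n hn (j : ℕ) (Nat.lt_succ_iff.mp j.isLt)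
      have hWfin : (W (o n)).Finite := hfin _ (ho_lt n)
      have hcard : hWfin.toFinset.card = m := by
        rw [← Set.ncard_eq_toFinset_card _ hWfin]; exact ho_card n
      obtain ⟨a, -, b, -, hab, heq⟩ :=
        Finset.exists_ne_map_eq_of_card_lt_of_maps_to (s := (Finset.univ : Finset (Fin (m + 1))))
          (t := hWfin.toFinset) (f := x)
          (by rw [hcard, Finset.card_univ, Fintype.card_fin]; exact Nat.lt_succ_self m)
          (fun j _ => hWfin.mem_toFinset.mpr (hx j))
      refine ⟨(a : ℕ), (b : ℕ), y a, y b, fun _ => ⟨Nat.lt_succ_iff.mp a.isLt,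
        Nat.lt_succ_iff.mp b.isLt, fun h => hab (Fin.val_injective h), hy a, hy b,
        i a, i b, ?_, ?_⟩⟩
      · rw [← hi a, ← hi b, heq]
      · rw [← hi a]; exact hx a
    · exact ⟨0, 1, (fun _ => 0), (fun _ => 0), fun h => absurd h hn⟩
  choose J L Y Y' hK using key
  -- Step 7: pigeonhole over n
  have hYfin : (⋃ j ∈ Set.Iic m, W (B j)).Finite :=
    (Set.finite_Iic m).biUnion fun j _ => hfin _ (hBlt j)
  obtain ⟨⟨j₀, l₀, y, y'⟩, hM'⟩ :=
    infinite_fiber hMinf (fun n => (J n, L n, Y n, Y' n))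
      (((Set.finite_Iic m).prod ((Set.finite_Iic m).prod (hYfin.prod hYfin))))
      (by
        intro n hn
        obtain ⟨h1, h2, h3, h4, h5, -⟩ := hK n hn
        exact ⟨h1, h2, Set.mem_biUnion h1 h4, Set.mem_biUnion h2 h5⟩)
  set M' : Set ℕ := {n | n ∈ Mset ∧ (J n, L n, Y n, Y' n) = (j₀, l₀, y, y')} with hM'def
  have hdecode : ∀ n ∈ M', J n = j₀ ∧ L n = l₀ ∧ Y n = y ∧ Y' n = y' := by
    intro n hn
    have h := hn.2
    simpa [Prod.ext_iff] using h
  obtain ⟨n₀, hn₀⟩ := hM'.nonempty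
  obtain ⟨hj₀m, hl₀m, hjl, hy, hy', -⟩ := hK n₀ hn₀.1
  obtain ⟨e1, e2, e3, e4⟩ := hdecode n₀ hn₀
  rw [e1] at hj₀m hjl hy
  rw [e2] at hl₀m hjl hy'
  rw [e3] at hy
  rw [e4] at hy'
  -- Step 8: choose the i's
  have hiex : ∀ n : ℕ, ∃ i i' : ℕ, n ∈ M' →
      fseq σ i y = fseq σ i' y' ∧ fseq σ i y ∈ W (o n) := by
    intro n
    by_cases hn : n ∈ M'
    · obtain ⟨-, -, -, -, -, i, i', h1, h2⟩ := hK n hn.1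
      obtain ⟨-, -, f3, f4⟩ := hdecode n hn
      rw [f3] at h1 h2
      rw [f4] at h1
      exact ⟨i, i', fun _ => ⟨h1, h2⟩⟩
    · exact ⟨0, 0, fun h => absurd h hn⟩
  choose I I' hI using hiex
  -- Step 9: the maps n ↦ I n (resp. I' n) have finite sublevel sets on M'
  have hInj : ∀ (I₂ : ℕ → ℕ) (z : ℕ → ℕ), (∀ n ∈ M', fseq σ (I₂ n) z ∈ W (o n)) →
      ∀ K : ℕ, {n | n ∈ M' ∧ I₂ n < K}.Finite := by
    intro I₂ z hz K
    have hinj : Set.InjOn I₂ {n | n ∈ M' ∧ I₂ n < K} := by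
      intro a ha b hb hab
      by_contra hne
      have hWd := hdisj (o a) (ho_lt a) (o b) (ho_lt b) (ho_inj.ne hne)
      have h1 := hz a ha.1
      have h2 := hz b hb.1
      rw [hab] at h1
      exact Set.disjoint_left.mp hWd h1 h2
    exact Set.Finite.of_finite_image
      ((Set.finite_Iio K).subset (by rintro _ ⟨n, hn, rfl⟩; exact hn.2)) hinj
  -- Step 10: y = y'
  have hyy : y = y' := by
    funext k
    have hfin2 : {n | n ∈ M' ∧ I n < k + 1}.Finite :=
      hInj I y (fun n hn => (hI n hn).2) (k + 1)
    have hfin3 : {n | n ∈ M' ∧ I' n < k + 1}.Finite :=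
      hInj I' y' (fun n hn => (hI n hn).1 ▸ (hI n hn).2) (k + 1)
    obtain ⟨n, hn⟩ := (hM'.diff (hfin2.union hfin3)).nonempty
    have hnM : n ∈ M' := hn.1
    have hIk : k < I n := by
      by_contra h
      exact hn.2 (Or.inl ⟨hnM, by omega⟩)
    have hI'k : k < I' n := by
      by_contra h
      exact hn.2 (Or.inr ⟨hnM, by omega⟩)
    have h1 := congrFun (hI n hnM).1 k
    simp only [fseq] at h1
    rw [if_pos hIk, if_pos hI'k] at h1
    exact h1
  -- Step 11: contradiction with disjointness
  have hd := hdisj (B j₀) (hBlt j₀) (B l₀) (hBlt l₀) (hBne hjl)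
  rw [← hyy] at hy'
  exact Set.disjoint_left.mp hd hy hy'
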